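/- If $Z_1,\dots,Z_n,Z_{n+1}$ are exchangeable real-valued random variables, then for any $\alpha\in(0,1)$, the probability that $Z_{n+1}$ is at most the $\lceil (1-\alpha)(n+1)\rceil$-th smallest value among $Z_1,\dots,Z_n$ (with the convention that this value is $+\infty$ if $\lceil(1-\alpha)(n+1)\rceil > n$) is at least $1-\alpha$. -/

import Mathlib

open MeasureTheory
open scoped ENNReal NNReal

/-- The `k`-th smallest value (1-indexed) of the vector `v : Fin n → ℝ`, with the
convention that it is `+∞` (in `EReal`) if `k > n`. -/
noncomputable def kthSmallest (n : ℕ) (v : Fin n → ℝ) (k : ℕ) : EReal :=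
  if h : k - 1 < n then ((v (Tuple.sort v ⟨k - 1, h⟩) : ℝ) : EReal) else ⊤

open Finset in
lemma card_filter_perm {n : ℕ} (σ : Equiv.Perm (Fin n)) (p : Fin n → Prop) [DecidablePred p] :
    (univ.filter fun i => p (σ i)).card = (univ.filter p).card := by
  apply Finset.card_equiv σ
  intro i
  simp

open Finset in
/-- For a monotone tuple `w`, `x ≤ w t` iff fewer than `t+1` entries are `< x`. -/
lemma le_monotone_iff {n : ℕ} {w : Fin n → ℝ} (hw : Monotone w) (t : Fin n) (x : ℝ) :
    x ≤ w t ↔ (univ.filter fun i => w i < x).card < t.val + 1 := by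
  constructor
  · intro hx
    have hsub : (univ.filter fun i => w i < x) ⊆ Iio t := by
      intro i hi
      simp only [mem_filter, mem_univ, true_and] at hi
      rw [Finset.mem_Iio]
      by_contra hc
      exact absurd (lt_of_lt_of_le hi hx) (not_lt.mpr (hw (not_lt.mp hc)))
    calc (univ.filter fun i => w i < x).card ≤ (Iio t).card := Finset.card_le_card hsub
      _ = t.val := Fin.card_Iio t
      _ < t.val + 1 := Nat.lt_succ_self _
  · intro hcard
    by_contra hc
    push_neg at hc
    have hsub : Iic t ⊆ (univ.filter fun i => w i < x) := by
      intro i hi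
      rw [Finset.mem_Iic] at hi
      simp only [mem_filter, mem_univ, true_and]
      exact lt_of_le_of_lt (hw hi) hc
    have := Finset.card_le_card hsub
    rw [Fin.card_Iic] at this
    omega

open Finset in
lemma le_sorted_iff {n : ℕ} (v : Fin n → ℝ) (x : ℝ) (k : ℕ) (hk : k - 1 < n) (hk1 : 1 ≤ k) :
    x ≤ v (Tuple.sort v ⟨k - 1, hk⟩) ↔ (univ.filter fun i => v i < x).card < k := by
  have h := le_monotone_iff (Tuple.monotone_sort v) ⟨k - 1, hk⟩ x
  simp only [Function.comp] at h
  rw [h, card_filter_perm (Tuple.sort v) (fun i => v i < x)]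
  omega

open Finset in
/-- Counting lemma: at least `k` indices have strict rank `< k`. -/
lemma counting_lemma {m : ℕ} (x : Fin m → ℝ) (k : ℕ) (hk : k ≤ m) :
    k ≤ (univ.filter fun i => (univ.filter fun j => x j < x i).card < k).card := by
  rcases Nat.eq_zero_or_pos k with hk0 | hkpos
  · simp [hk0]
  have hm : 0 < m := lt_of_lt_of_le hkpos hk
  have hrange : (Finset.range k).card = k := Finset.card_range k
  rw [← hrange]
  apply Finset.card_le_card_of_injOn (fun t => Tuple.sort x ⟨t % m, Nat.mod_lt _ hm⟩)
  · intro t ht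
    simp only [Finset.coe_range, Set.mem_Iio] at ht
    have htk : t % m < k := by rw [Nat.mod_eq_of_lt (lt_of_lt_of_le ht hk)]; exact ht
    simp only [Finset.mem_coe, mem_filter, mem_univ, true_and]
    set c := x (Tuple.sort x ⟨t % m, Nat.mod_lt _ hm⟩) with hc
    have h := (le_monotone_iff (Tuple.monotone_sort x) ⟨t % m, Nat.mod_lt _ hm⟩ c).mp
      (le_of_eq rfl)
    rw [← card_filter_perm (Tuple.sort x) (fun j => x j < c)]
    simp only [Function.comp] at h
    omega
  · intro t1 h1 t2 h2 heq
    simp only [Finset.coe_range, Set.mem_Iio] at h1 h2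
    have := (Tuple.sort x).injective heq
    have h1m : t1 % m = t1 := Nat.mod_eq_of_lt (lt_of_lt_of_le h1 hk)
    have h2m : t2 % m = t2 := Nat.mod_eq_of_lt (lt_of_lt_of_le h2 hk)
    have : (t1 % m) = (t2 % m) := Fin.mk.inj_iff.mp this
    omega


open Finset in
lemma card_last {n : ℕ} (y : Fin (n + 1) → ℝ) :
    (univ.filter fun j : Fin (n + 1) => y j < y (Fin.last n)).card
      = (univ.filter fun i : Fin n => y i.castSucc < y (Fin.last n)).card := by
  rw [Finset.card_filter, Finset.card_filter, Fin.sum_univ_castSucc]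
  simp

theorem conformal_marginal_validity
    {Ω : Type*} [MeasurableSpace Ω] (P : Measure Ω) [IsProbabilityMeasure P]
    (n : ℕ) (Z : Fin (n + 1) → Ω → ℝ) (hmeas : ∀ i, Measurable (Z i))
    (hexch : ∀ σ : Equiv.Perm (Fin (n + 1)),
      Measure.map (fun ω i => Z (σ i) ω) P = Measure.map (fun ω i => Z i ω) P)
    (α : ℝ) (hα : α ∈ Set.Ioo (0 : ℝ) 1) :
    1 - α ≤
      (P {ω : Ω | (Z (Fin.last n) ω : EReal) ≤
        kthSmallest n (fun i : Fin n => Z i.castSucc ω)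
          ⌈(1 - α) * (n + 1)⌉₊}).toReal := by
  obtain ⟨hα0, hα1⟩ := hα
  set k := ⌈(1 - α) * (n + 1)⌉₊ with hkdef
  have hpos : (0 : ℝ) < (1 - α) * (n + 1) :=
    mul_pos (by linarith) (by positivity)
  have hkpos : 1 ≤ k := Nat.one_le_iff_ne_zero.mpr (by
    simp only [hkdef, ne_eq, Nat.ceil_eq_zero, not_le]; exact hpos)
  by_cases hkn : k ≤ n
  swap
  · -- case k > n : the quantile is ⊤ and the event is everything
    have hset : {ω : Ω | (Z (Fin.last n) ω : EReal) ≤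
        kthSmallest n (fun i : Fin n => Z i.castSucc ω) k} = Set.univ := by
      ext ω
      simp only [Set.mem_setOf_eq, Set.mem_univ, iff_true, kthSmallest]
      rw [dif_neg (by omega)]
      exact le_top
    rw [hset, measure_univ, ENNReal.toReal_one]
    linarith
  -- main case
  have hkn' : k - 1 < n := by omega
  classical
  set ζ : Ω → (Fin (n + 1) → ℝ) := fun ω i => Z i ω with hζdef
  have hζ : Measurable ζ := measurable_pi_lambda _ hmeas
  set cnt : (Fin (n + 1) → ℝ) → Fin (n + 1) → ℕ :=
    fun x i => (Finset.univ.filter fun j => x j < x i).card with hcnt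
  have hcntmeas : ∀ i, Measurable fun x => cnt x i := by
    intro i
    have : (fun x => cnt x i)
        = fun x => ∑ j : Fin (n + 1), if x j < x i then 1 else 0 := by
      funext x
      show (Finset.univ.filter fun j => x j < x i).card = _
      rw [Finset.card_filter]
    rw [this]
    exact Finset.measurable_sum _ fun j _ =>
      Measurable.ite (measurableSet_lt (measurable_pi_apply j) (measurable_pi_apply i))
        measurable_const measurable_const
  set S : Fin (n + 1) → Set (Fin (n + 1) → ℝ) := fun i => {x | cnt x i < k} with hSdef
  have hS : ∀ i, MeasurableSet (S i) := fun i =>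
    (hcntmeas i) (MeasurableSet.of_discrete (s := Set.Iio k))
  set B : Fin (n + 1) → Set Ω := fun i => ζ ⁻¹' S i with hBdef
  have hB : ∀ i, MeasurableSet (B i) := fun i => hζ (hS i)
  -- all B i have the same probability
  have hmap : ∀ i, P (B i) = P (B (Fin.last n)) := by
    intro i
    set σ := Equiv.swap i (Fin.last n) with hσ
    have hζσ : Measurable fun ω (j : Fin (n + 1)) => Z (σ j) ω :=
      measurable_pi_lambda _ fun j => hmeas _
    have hpre : (fun ω (j : Fin (n + 1)) => Z (σ j) ω) ⁻¹' S (Fin.last n) = B i := by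
      ext ω
      simp only [hBdef, hSdef, Set.mem_preimage, Set.mem_setOf_eq, hcnt]
      have hσl : σ (Fin.last n) = i := Equiv.swap_apply_right _ _
      have hcard : (Finset.univ.filter fun j => Z (σ j) ω < Z (σ (Fin.last n)) ω).card
          = (Finset.univ.filter fun j => Z j ω < Z i ω).card := by
        simp only [hσl]
        exact card_filter_perm σ (fun j => Z j ω < Z i ω)
      rw [hcard]
    calc P (B i) = Measure.map (fun ω (j : Fin (n + 1)) => Z (σ j) ω) P (S (Fin.last n)) := by
          rw [Measure.map_apply hζσ (hS _), hpre]
      _ = Measure.map (fun ω (j : Fin (n + 1)) => Z j ω) P (S (Fin.last n)) := by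
          rw [hexch σ]
      _ = P (B (Fin.last n)) := by rw [Measure.map_apply hζ (hS _)]
  -- pointwise counting bound
  have hpoint : ∀ ω, (k : ℝ≥0∞) ≤ ∑ i : Fin (n + 1), (B i).indicator (fun _ => 1) ω := by
    intro ω
    have hcount := counting_lemma (ζ ω) k (by omega)
    have heq : ∑ i : Fin (n + 1), (B i).indicator (fun _ => (1 : ℝ≥0∞)) ω
        = ((Finset.univ.filter fun i => cnt (ζ ω) i < k).card : ℝ≥0∞) := by
      rw [Finset.card_filter]
      push_cast
      refine Finset.sum_congr rfl fun i _ => ?_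
      by_cases h : cnt (ζ ω) i < k
      · simp [Set.indicator, hBdef, hSdef, h]
      · simp [Set.indicator, hBdef, hSdef, h]
    rw [heq]
    exact_mod_cast hcount
  -- integrate
  have hsum : (k : ℝ≥0∞) ≤ (n + 1) * P (B (Fin.last n)) := by
    calc (k : ℝ≥0∞) = ∫⁻ _, (k : ℝ≥0∞) ∂P := by simp
      _ ≤ ∫⁻ ω, ∑ i : Fin (n + 1), (B i).indicator (fun _ => 1) ω ∂P := lintegral_mono hpoint
      _ = ∑ i : Fin (n + 1), ∫⁻ ω, (B i).indicator (fun _ => 1) ω ∂P :=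
          lintegral_finset_sum _ fun i _ => measurable_const.indicator (hB i)
      _ = ∑ i : Fin (n + 1), P (B i) := by
          refine Finset.sum_congr rfl fun i _ => ?_
          exact lintegral_indicator_one (hB i)
      _ = ∑ _i : Fin (n + 1), P (B (Fin.last n)) := Finset.sum_congr rfl fun i _ => hmap i
      _ = (n + 1) * P (B (Fin.last n)) := by
          rw [Finset.sum_const, Finset.card_univ, Fintype.card_fin, nsmul_eq_mul]
          push_cast
          ring
  -- the event equals B (last)
  have hset : {ω : Ω | (Z (Fin.last n) ω : EReal) ≤
      kthSmallest n (fun i : Fin n => Z i.castSucc ω) k} = B (Fin.last n) := by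
    ext ω
    simp only [Set.mem_setOf_eq, hBdef, hSdef, Set.mem_preimage, hcnt, kthSmallest]
    rw [dif_pos hkn', EReal.coe_le_coe_iff]
    rw [le_sorted_iff (fun i : Fin n => Z i.castSucc ω) (Z (Fin.last n) ω) k hkn' hkpos]
    rw [card_last (ζ ω)]
  rw [hset]
  -- finish with real arithmetic
  have hfin : ((n : ℝ≥0∞) + 1) * P (B (Fin.last n)) ≠ ⊤ :=
    ENNReal.mul_ne_top (by simp) (measure_ne_top P _)
  have h1 := ENNReal.toReal_mono hfin hsum
  rw [ENNReal.toReal_mul] at h1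
  have h2 : ((n : ℝ≥0∞) + 1).toReal = (n : ℝ) + 1 := by
    rw [show ((n : ℝ≥0∞) + 1) = ((n + 1 : ℕ) : ℝ≥0∞) by push_cast; ring, ENNReal.toReal_natCast]
    push_cast; ring
  have h3 : ((k : ℝ≥0∞)).toReal = (k : ℝ) := ENNReal.toReal_natCast k
  rw [h2, h3] at h1
  have hceil : (1 - α) * (n + 1) ≤ (k : ℝ) := Nat.le_ceil _
  have hn1 : (0 : ℝ) < (n : ℝ) + 1 := by positivity
  nlinarith [h1, hceil]
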